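/- Let μ⁺ and μ⁻ be finite positive Borel measures on ℝ with Borel transforms m⁺ and m⁻, and for Im z > 0 set M(z) = (m⁺(z)·m⁻(z) − 1)/(m⁺(z) + m⁻(z)). Let E ∈ ℝ and t ∈ (0,1). Suppose there exists ε₀ > 0 such that for all 0 < ε < ε₀ one has Im m⁺(E+iε) ≥ ε^{−t} and Im m⁻(E+iε) ≥ ε^{−t}. Then there exists ε₁ > 0 such that for all 0 < ε < ε₁, Im M(E+iε) ≥ (1/2)·ε^{−t}. -/
import Mathlib


open MeasureTheory Filter Set

/-- The Borel transform `m(z) = ∫ (x - z)⁻¹ dν(x)` of a measure `ν` on `ℝ`. -/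
noncomputable def borelTransform (ν : Measure ℝ) (z : ℂ) : ℂ :=
  ∫ x : ℝ, ((x : ℂ) - z)⁻¹ ∂ν

lemma key_ineq (a b : ℂ) (s : ℝ) (hs : 0 < s) (ha : s ≤ a.im) (hb : s ≤ b.im) :
    (1 / 2) * s ≤ ((a * b - 1) / (a + b)).im := by
  have hden : 0 < Complex.normSq (a + b) := by
    have : (a + b).im ≠ 0 := by
      simp only [Complex.add_im]; nlinarith
    have : a + b ≠ 0 := fun h => this (by simp [h])
    exact Complex.normSq_pos.mpr this
  rw [Complex.div_im, div_sub_div_same, le_div_iff₀ hden]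
  simp only [Complex.normSq_apply, Complex.mul_im, Complex.mul_re, Complex.sub_im,
    Complex.sub_re, Complex.add_im, Complex.add_re, Complex.one_im, Complex.one_re]
  nlinarith [sq_nonneg (a.re - b.re), sq_nonneg (a.im - b.im), sq_nonneg a.re,
    sq_nonneg b.re, mul_le_mul_of_nonneg_left ha (sq_nonneg b.re),
    mul_le_mul_of_nonneg_left hb (sq_nonneg a.re),
    mul_le_mul_of_nonneg_left ha (sq_nonneg b.im),
    mul_le_mul_of_nonneg_left hb (sq_nonneg a.im)]

/-- If both half-line Borel transforms satisfy `Im m^±(E+iε) ≥ ε^{-t}` for small `ε`,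
then `M = (m⁺ m⁻ - 1)/(m⁺ + m⁻)` satisfies `Im M(E+iε) ≥ ε^{-t}/2` for small `ε`. -/
theorem stmt_4 (μp μm : Measure ℝ) [IsFiniteMeasure μp] [IsFiniteMeasure μm]
    (E t : ℝ) (ht0 : 0 < t) (ht1 : t < 1)
    (M : ℂ → ℂ)
    (hM : ∀ z : ℂ, 0 < z.im →
      M z = (borelTransform μp z * borelTransform μm z - 1) /
        (borelTransform μp z + borelTransform μm z))
    (ε₀ : ℝ) (hε₀ : 0 < ε₀)
    (h : ∀ ε : ℝ, 0 < ε → ε < ε₀ →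
      ε ^ (-t) ≤ (borelTransform μp (E + ε * Complex.I)).im ∧
      ε ^ (-t) ≤ (borelTransform μm (E + ε * Complex.I)).im) :
    ∃ ε₁ : ℝ, 0 < ε₁ ∧ ∀ ε : ℝ, 0 < ε → ε < ε₁ →
      (1 / 2) * ε ^ (-t) ≤ (M (E + ε * Complex.I)).im := by
  refine ⟨ε₀, hε₀, fun ε hε hεlt => ?_⟩
  obtain ⟨ha, hb⟩ := h ε hε hεlt
  have hzim : (0 : ℝ) < ((E : ℂ) + ε * Complex.I).im := by
    simp [Complex.add_im, Complex.mul_im, hε]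
  rw [hM _ hzim]
  exact key_ineq _ _ _ (Real.rpow_pos_of_pos hε _) ha hb
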